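/- Let A be the 2×2 complex matrix with all entries 1 and D = diag(1, -1). Then w(A) = 2 while w(DA) = w(D⁻¹A) = 1, so the inequality w(A)² ≤ w(DA)·w(D⁻¹A) fails; here w denotes the numerical radius of a matrix acting on ℂ². -/

import Mathlib

open scoped Matrix

/-- The numerical radius of an `n × n` complex matrix, viewed as an operator on `ℂⁿ`
with the Euclidean norm. -/
noncomputable def matNumRad {n : ℕ} (M : Matrix (Fin n) (Fin n) ℂ) : ℝ :=
  sSup {r : ℝ | ∃ x : EuclideanSpace ℂ (Fin n), ‖x‖ = 1 ∧
    r = ‖(inner ℂ (Matrix.toEuclideanCLM (𝕜 := ℂ) M x) x : ℂ)‖}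

lemma inner2 (M : Matrix (Fin 2) (Fin 2) ℂ) (x : EuclideanSpace ℂ (Fin 2)) :
    (inner ℂ (Matrix.toEuclideanCLM (𝕜 := ℂ) M x) x : ℂ) =
      starRingEnd ℂ (M 0 0 * x 0 + M 0 1 * x 1) * x 0 +
      starRingEnd ℂ (M 1 0 * x 0 + M 1 1 * x 1) * x 1 := by
  have h : ∀ i, (Matrix.toEuclideanCLM (𝕜 := ℂ) M x) i =
      M.mulVec (WithLp.equiv 2 _ x) i := fun i =>
    congrFun (Matrix.ofLp_toEuclideanCLM M x) i
  simp [PiLp.inner_apply, Fin.sum_univ_two, h, Matrix.mulVec, dotProduct,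
    WithLp.equiv, Equiv.refl_apply]
  ring

lemma norm2 (x : EuclideanSpace ℂ (Fin 2)) (hx : ‖x‖ = 1) :
    ‖x 0‖ ^ 2 + ‖x 1‖ ^ 2 = 1 := by
  have h := EuclideanSpace.norm_eq x
  rw [hx] at h
  have h2 : Real.sqrt (∑ i : Fin 2, ‖x i‖ ^ 2) = 1 := h.symm
  simpa [Fin.sum_univ_two] using Real.sqrt_eq_one.mp h2

lemma innerA (x : EuclideanSpace ℂ (Fin 2)) :
    (inner ℂ (Matrix.toEuclideanCLM (𝕜 := ℂ) (!![1,1;1,1]) x) x : ℂ) =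
      starRingEnd ℂ (x 0 + x 1) * (x 0 + x 1) := by
  rw [inner2]; norm_num; ring

lemma matNumRad_eq_two_A :
    matNumRad (!![1, 1; 1, 1] : Matrix (Fin 2) (Fin 2) ℂ) = 2 := by
  apply IsGreatest.csSup_eq
  constructor
  · refine ⟨(WithLp.equiv 2 (Fin 2 → ℂ)).symm
      ![((Real.sqrt 2)⁻¹ : ℝ), ((Real.sqrt 2)⁻¹ : ℝ)], ?_, ?_⟩
    · rw [EuclideanSpace.norm_eq]
      have h : (0:ℝ) < Real.sqrt 2 := Real.sqrt_pos.mpr (by norm_num)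
      have h2 : ((Real.sqrt 2)⁻¹ : ℝ) ^ 2 = 1/2 := by
        rw [inv_pow, Real.sq_sqrt (by norm_num : (0:ℝ) ≤ 2)]; norm_num
      simp only [Fin.sum_univ_two]
      have e : ∀ i : Fin 2, ((WithLp.equiv 2 (Fin 2 → ℂ)).symm
          ![((Real.sqrt 2)⁻¹ : ℝ), ((Real.sqrt 2)⁻¹ : ℝ)]) i
          = (((Real.sqrt 2)⁻¹ : ℝ) : ℂ) := by
        intro i; fin_cases i <;> rfl
      rw [e 0, e 1, Complex.norm_real, Real.norm_eq_abs, abs_of_pos (by positivity), h2]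
      norm_num
    · rw [innerA]
      have e : ∀ i : Fin 2, ((WithLp.equiv 2 (Fin 2 → ℂ)).symm
          ![((Real.sqrt 2)⁻¹ : ℝ), ((Real.sqrt 2)⁻¹ : ℝ)]) i
          = (((Real.sqrt 2)⁻¹ : ℝ) : ℂ) := by
        intro i; fin_cases i <;> rfl
      rw [e 0, e 1]
      have : (0:ℝ) < Real.sqrt 2 := Real.sqrt_pos.mpr (by norm_num)
      rw [← Complex.ofReal_add, Complex.conj_ofReal, ← Complex.ofReal_mul, Complex.norm_real,
        Real.norm_eq_abs]
      rw [abs_of_pos (by positivity)]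
      have h2 : (Real.sqrt 2) * (Real.sqrt 2) = 2 := Real.mul_self_sqrt (by norm_num)
      field_simp
      nlinarith
  · rintro r ⟨x, hx, rfl⟩
    rw [innerA, norm_mul, RCLike.norm_conj]
    have hn := norm2 x hx
    have hb : ‖x 0 + x 1‖ ≤ ‖x 0‖ + ‖x 1‖ := norm_add_le _ _
    nlinarith [norm_nonneg (x 0), norm_nonneg (x 1), norm_nonneg (x 0 + x 1),
      mul_self_le_mul_self (norm_nonneg (x 0 + x 1)) hb, sq_nonneg (‖x 0‖ - ‖x 1‖)]

lemma innerDA (x : EuclideanSpace ℂ (Fin 2)) :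
    (inner ℂ (Matrix.toEuclideanCLM (𝕜 := ℂ) (!![1,1;-1,-1]) x) x : ℂ) =
      starRingEnd ℂ (x 0 + x 1) * (x 0 - x 1) := by
  rw [inner2]; norm_num; ring

lemma matNumRad_eq_one_DA :
    matNumRad (!![1, 1; -1, -1] : Matrix (Fin 2) (Fin 2) ℂ) = 1 := by
  apply IsGreatest.csSup_eq
  constructor
  · refine ⟨(WithLp.equiv 2 (Fin 2 → ℂ)).symm ![1, 0], ?_, ?_⟩
    · rw [EuclideanSpace.norm_eq]
      have e0 : ((WithLp.equiv 2 (Fin 2 → ℂ)).symm ![1, 0]) 0 = 1 := rfl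
      have e1 : ((WithLp.equiv 2 (Fin 2 → ℂ)).symm ![1, 0]) 1 = 0 := rfl
      simp [Fin.sum_univ_two, e0, e1]
    · rw [innerDA]
      have e0 : ((WithLp.equiv 2 (Fin 2 → ℂ)).symm ![1, 0]) 0 = 1 := rfl
      have e1 : ((WithLp.equiv 2 (Fin 2 → ℂ)).symm ![1, 0]) 1 = 0 := rfl
      rw [e0, e1]
      norm_num
  · rintro r ⟨x, hx, rfl⟩
    rw [innerDA, norm_mul, RCLike.norm_conj]
    have hn := norm2 x hx
    have par : ‖x 0 + x 1‖ ^ 2 + ‖x 0 - x 1‖ ^ 2 = 2 * (‖x 0‖ ^ 2 + ‖x 1‖ ^ 2) := by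
      simp only [Complex.sq_norm, Complex.normSq_apply,
        Complex.add_re, Complex.add_im, Complex.sub_re, Complex.sub_im]
      ring
    nlinarith [sq_nonneg (‖x 0 + x 1‖ - ‖x 0 - x 1‖), norm_nonneg (x 0 + x 1),
      norm_nonneg (x 0 - x 1)]


lemma hDinv : (!![1, 0; 0, -1] : Matrix (Fin 2) (Fin 2) ℂ)⁻¹ = !![1, 0; 0, -1] :=
  Matrix.inv_eq_right_inv (by rw [Matrix.mul_fin_two]; norm_num [← Matrix.one_fin_two])

lemma hDA : (!![1, 0; 0, -1] : Matrix (Fin 2) (Fin 2) ℂ) * !![1, 1; 1, 1] = !![1, 1; -1, -1] := by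
  norm_num [Matrix.mul_fin_two]

/-- For `A = !![1,1;1,1]` and `D = diag(1,-1)` we have `w(A) = 2` and
`w(DA) = w(D⁻¹A) = 1`, so `w(A)² ≤ w(DA)·w(D⁻¹A)` fails. -/
theorem numRad_counterexample :
    matNumRad (!![1, 1; 1, 1] : Matrix (Fin 2) (Fin 2) ℂ) = 2 ∧
    matNumRad ((!![1, 0; 0, -1] : Matrix (Fin 2) (Fin 2) ℂ) * !![1, 1; 1, 1]) = 1 ∧
    matNumRad ((!![1, 0; 0, -1] : Matrix (Fin 2) (Fin 2) ℂ)⁻¹ * !![1, 1; 1, 1]) = 1 ∧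
    ¬ (matNumRad (!![1, 1; 1, 1] : Matrix (Fin 2) (Fin 2) ℂ) ^ 2 ≤
        matNumRad ((!![1, 0; 0, -1] : Matrix (Fin 2) (Fin 2) ℂ) * !![1, 1; 1, 1]) *
        matNumRad ((!![1, 0; 0, -1] : Matrix (Fin 2) (Fin 2) ℂ)⁻¹ * !![1, 1; 1, 1])) := by
  rw [hDinv, hDA, matNumRad_eq_two_A, matNumRad_eq_one_DA]
  norm_num
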